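/- Let k ≥ 1 and n ≥ k + 2 be integers and let M be a set of size m = n^k. Then there exists a function f mapping each k-element subset X of M to a k!-element subset f(X) of M such that X ∩ f(X) = ∅ for every k-element subset X of M, and such that every subset P ⊆ M with |P| > k²n contains a k-element subset X ⊆ P with f(X) ∩ P ≠ ∅. -/

import Mathlib

open Finset

lemma myfact_add (k n : ℕ) (hk : 1 ≤ k) (hn : k + 2 ≤ n) :
    Nat.factorial k + k ≤ n ^ k := by
  have h1 : Nat.factorial k + k ≤ Nat.factorial (k + 1) := by
    rw [Nat.factorial_succ]
    nlinarith [Nat.factorial_pos k]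
  have h2 : ∀ k : ℕ, 1 ≤ k → Nat.factorial (k + 1) ≤ (k + 2) ^ k := by
    intro k hk
    induction k with
    | zero => simp
    | succ m ih =>
      rcases Nat.eq_or_lt_of_le hk with h | h
      · obtain rfl : m = 0 := by omega
        norm_num [Nat.factorial]
      · have hm : 1 ≤ m := by omega
        have := ih hm
        calc Nat.factorial (m + 2) = (m + 2) * Nat.factorial (m + 1) := rfl
          _ ≤ (m + 2) * (m + 2) ^ m := Nat.mul_le_mul_left _ this
          _ = (m + 2) ^ (m + 1) := by ring
          _ ≤ (m + 3) ^ (m + 1) := Nat.pow_le_pow_left (by omega) _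
  calc Nat.factorial k + k ≤ Nat.factorial (k + 1) := h1
    _ ≤ (k + 2) ^ k := h2 k hk
    _ ≤ n ^ k := Nat.pow_le_pow_left hn _

/-- The set of "diagonal mixes" of a `k`-set in `(Fin k → Fin n)`. -/
noncomputable def mixes (k n : ℕ) (X : Finset (Fin k → Fin n)) : Finset (Fin k → Fin n) :=
  Finset.image (fun g : Fin k ↪ {x // x ∈ X} => fun i : Fin k => ((g i : Fin k → Fin n) i))
    Finset.univ

lemma card_mixes_le (k n : ℕ) (X : Finset (Fin k → Fin n)) (hX : X.card = k) :
    (mixes k n X).card ≤ Nat.factorial k := by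
  classical
  calc (mixes k n X).card ≤ (Finset.univ : Finset (Fin k ↪ {x // x ∈ X})).card :=
        Finset.card_image_le
    _ = Fintype.card (Fin k ↪ {x // x ∈ X}) := Finset.card_univ
    _ = Nat.factorial k := by
        rw [Fintype.card_embedding_eq, Fintype.card_coe, hX, Fintype.card_fin,
          Nat.descFactorial_self]

lemma mem_mixes (k n : ℕ) (X : Finset (Fin k → Fin n)) (g : Fin k → (Fin k → Fin n))
    (hg : Function.Injective g) (hgX : ∀ i, g i ∈ X) :
    (fun i : Fin k => g i i) ∈ mixes k n X := by
  classical
  refine Finset.mem_image.mpr ⟨⟨fun i => ⟨g i, hgX i⟩, ?_⟩, Finset.mem_univ _, rfl⟩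
  intro a b hab
  exact hg (by simpa using hab)

theorem core (k n : ℕ) (hk : 1 ≤ k) (hn : k + 2 ≤ n) :
    ∃ f : Finset (Fin k → Fin n) → Finset (Fin k → Fin n),
      (∀ X, X.card = k →
        (f X).card = Nat.factorial k ∧ Disjoint X (f X)) ∧
      (∀ P : Finset (Fin k → Fin n), k ^ 2 * n < P.card →
        ∃ X, X ⊆ P ∧ X.card = k ∧ (f X ∩ P).Nonempty) := by
  classical
  have hcusub : ∀ X : Finset (Fin k → Fin n), X.card = k →
      Nat.factorial k ≤ (Finset.univ \ X).card := by
    intro X hX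
    rw [Finset.card_sdiff_of_subset (Finset.subset_univ _), Finset.card_univ, hX]
    have hcf : Fintype.card (Fin k → Fin n) = n ^ k := by
      simp [Fintype.card_fun]
    rw [hcf]
    exact Nat.le_sub_of_add_le (myfact_add k n hk hn)
  have key : ∀ X : Finset (Fin k → Fin n), X.card = k →
      ∃ u, (mixes k n X \ X) ⊆ u ∧ u ⊆ Finset.univ \ X ∧ u.card = Nat.factorial k := by
    intro X hX
    exact Finset.exists_subsuperset_card_eq
      (Finset.sdiff_subset_sdiff (Finset.subset_univ _) Finset.Subset.rfl)
      (le_trans (Finset.card_le_card Finset.sdiff_subset) (card_mixes_le k n X hX))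
      (hcusub X hX)
  refine ⟨fun X => if h : X.card = k then (key X h).choose else ∅, ?_, ?_⟩
  · intro X hX
    obtain ⟨h1, h2, h3⟩ := (key X hX).choose_spec
    simp only [dif_pos hX]
    refine ⟨h3, ?_⟩
    exact Finset.disjoint_left.mpr fun a haX hau =>
      (Finset.mem_sdiff.mp (h2 hau)).2 haX
  · intro P hP
    -- find a good element z
    have hgood : ∃ z ∈ P, ∀ i : Fin k, k + 1 ≤ (P.filter fun x => x i = z i).card := by
      by_contra hcon
      push_neg at hcon
      have hsub : P ⊆ Finset.univ.biUnion (fun i : Fin k =>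
          ((Finset.univ : Finset (Fin n)).filter
            fun v => (P.filter fun x => x i = v).card ≤ k).biUnion
              fun v => P.filter fun x => x i = v) := by
        intro z hz
        obtain ⟨i, hi⟩ := hcon z hz
        refine Finset.mem_biUnion.mpr ⟨i, Finset.mem_univ _, ?_⟩
        refine Finset.mem_biUnion.mpr ⟨z i, ?_, ?_⟩
        · exact Finset.mem_filter.mpr ⟨Finset.mem_univ _, Nat.lt_succ_iff.mp hi⟩
        · exact Finset.mem_filter.mpr ⟨hz, rfl⟩
      have hb1 : P.card ≤ ∑ i : Fin k, (((Finset.univ : Finset (Fin n)).filter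
          fun v => (P.filter fun x => x i = v).card ≤ k).biUnion
            fun v => P.filter fun x => x i = v).card :=
        le_trans (Finset.card_le_card hsub) Finset.card_biUnion_le
      have hb2 : ∀ i : Fin k, (((Finset.univ : Finset (Fin n)).filter
          fun v => (P.filter fun x => x i = v).card ≤ k).biUnion
            fun v => P.filter fun x => x i = v).card ≤ k * n := by
        intro i
        have hs1 : (((Finset.univ : Finset (Fin n)).filter
            fun v => (P.filter fun x => x i = v).card ≤ k).biUnion
              fun v => P.filter fun x => x i = v).card ≤
            ∑ v ∈ ((Finset.univ : Finset (Fin n)).filter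
              fun v => (P.filter fun x => x i = v).card ≤ k),
                (P.filter fun x => x i = v).card := Finset.card_biUnion_le
        have hs2 : ∑ v ∈ ((Finset.univ : Finset (Fin n)).filter
            fun v => (P.filter fun x => x i = v).card ≤ k),
              (P.filter fun x => x i = v).card ≤
            ∑ _v ∈ ((Finset.univ : Finset (Fin n)).filter
              fun v => (P.filter fun x => x i = v).card ≤ k), k :=
          Finset.sum_le_sum fun v hv => (Finset.mem_filter.mp hv).2
        have hs3 : ∑ _v ∈ ((Finset.univ : Finset (Fin n)).filter
            fun v => (P.filter fun x => x i = v).card ≤ k), k ≤ n * k := by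
          rw [Finset.sum_const, smul_eq_mul]
          exact Nat.mul_le_mul_right _
            (le_trans (Finset.card_filter_le _ _) (by simp))
        exact le_trans hs1 (le_trans hs2 (le_trans hs3 (le_of_eq (Nat.mul_comm n k))))
      have hb3 : P.card ≤ ∑ _i : Fin k, (k * n) :=
        le_trans hb1 (Finset.sum_le_sum fun i _ => hb2 i)
      rw [Finset.sum_const, Finset.card_univ, Fintype.card_fin, smul_eq_mul] at hb3
      have heq : k * (k * n) = k ^ 2 * n := by ring
      rw [heq] at hb3
      exact absurd hP (not_lt.mpr hb3)
    obtain ⟨z, hzP, hzgood⟩ := hgood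
    -- Hall's theorem to get a system of distinct representatives
    set t : Fin k → Finset (Fin k → Fin n) :=
      fun i => (P.filter fun x => x i = z i).erase z with ht
    have htcard : ∀ i, k ≤ (t i).card := by
      intro i
      show k ≤ ((P.filter fun x => x i = z i).erase z).card
      have h1 := hzgood i
      have h3 := Finset.pred_card_le_card_erase (a := z)
        (s := P.filter fun x => x i = z i)
      exact le_trans (Nat.le_sub_one_of_lt (lt_of_lt_of_le (Nat.lt_succ_self k) h1)) h3
    have hall : ∀ s : Finset (Fin k), s.card ≤ (s.biUnion t).card := by
      intro s
      rcases s.eq_empty_or_nonempty with rfl | ⟨i, hi⟩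
      · simp
      · calc s.card ≤ k := le_trans (Finset.card_le_card (Finset.subset_univ s))
              (by simp)
          _ ≤ (t i).card := htcard i
          _ ≤ (s.biUnion t).card :=
              Finset.card_le_card (Finset.subset_biUnion_of_mem t hi)
    obtain ⟨g, hginj, hgt⟩ := (Finset.all_card_le_biUnion_card_iff_exists_injective t).mp hall
    have hgP : ∀ i, g i ∈ P := fun i =>
      (Finset.mem_filter.mp (Finset.mem_of_mem_erase (hgt i))).1
    have hgz : ∀ i, g i ≠ z := fun i => Finset.ne_of_mem_erase (hgt i)
    have hgzi : ∀ i, g i i = z i := fun i =>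
      (Finset.mem_filter.mp (Finset.mem_of_mem_erase (hgt i))).2
    set X : Finset (Fin k → Fin n) := Finset.image g Finset.univ with hX
    have hXcard : X.card = k := by
      rw [hX, Finset.card_image_of_injective _ hginj, Finset.card_univ, Fintype.card_fin]
    have hXP : X ⊆ P := by
      intro x hx
      obtain ⟨i, _, rfl⟩ := Finset.mem_image.mp hx
      exact hgP i
    have hzX : z ∉ X := by
      intro hzx
      obtain ⟨i, _, hgi⟩ := Finset.mem_image.mp hzx
      exact hgz i hgi
    have hzmix : z ∈ mixes k n X := by
      have := mem_mixes k n X g hginj (fun i => Finset.mem_image.mpr ⟨i, Finset.mem_univ _, rfl⟩)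
      have hzeq : (fun i : Fin k => g i i) = z := funext fun i => hgzi i
      rwa [hzeq] at this
    refine ⟨X, hXP, hXcard, ⟨z, ?_⟩⟩
    simp only [dif_pos hXcard]
    obtain ⟨h1, h2, h3⟩ := (key X hXcard).choose_spec
    exact Finset.mem_inter.mpr ⟨h1 (Finset.mem_sdiff.mpr ⟨hzmix, hzX⟩), hzP⟩



/-- **Erdős–Hajnal set mapping construction.**
Let `k ≥ 1` and `n ≥ k + 2` and let `M` be a set of size `m = n ^ k`. Then there is a
function `f` mapping each `k`-element subset `X` of `M` to a `k!`-element subset `f X` of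
`M` with `X ∩ f X = ∅`, such that every `P ⊆ M` with `|P| > k² n` contains a `k`-element
subset `X ⊆ P` with `f X ∩ P ≠ ∅`. -/
theorem stmt0 {α : Type*} [DecidableEq α] (k n : ℕ) (hk : 1 ≤ k) (hn : k + 2 ≤ n)
    (M : Finset α) (hM : M.card = n ^ k) :
    ∃ f : Finset α → Finset α,
      (∀ X : Finset α, X ⊆ M → X.card = k →
        f X ⊆ M ∧ (f X).card = Nat.factorial k ∧ Disjoint X (f X)) ∧
      (∀ P : Finset α, P ⊆ M → k ^ 2 * n < P.card →
        ∃ X : Finset α, X ⊆ P ∧ X.card = k ∧ (f X ∩ P).Nonempty) := by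
  classical
  obtain ⟨f₀, hf₀1, hf₀2⟩ := core k n hk hn
  have hcards : Fintype.card (Fin k → Fin n) = Fintype.card {x // x ∈ M} := by
    simp [Fintype.card_fun, Fintype.card_coe, hM]
  obtain ⟨e⟩ : Nonempty ((Fin k → Fin n) ≃ {x // x ∈ M}) :=
    ⟨Fintype.equivOfCardEq hcards⟩
  set ψ : (Fin k → Fin n) ↪ α :=
    ⟨fun b => (e b : α), fun a b h => e.injective (Subtype.ext h)⟩ with hψ
  have hψM : ∀ b, ψ b ∈ M := fun b => (e b).2
  have hψinv : ∀ x (hx : x ∈ M), ψ (e.symm ⟨x, hx⟩) = x := by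
    intro x hx
    simp [hψ]
    exact congrArg Subtype.val (e.apply_symm_apply ⟨x, hx⟩)
  set g : Finset α → Finset (Fin k → Fin n) :=
    fun S => Finset.univ.filter (fun b => ψ b ∈ S) with hg
  have hmapg : ∀ S : Finset α, S ⊆ M → (g S).map ψ = S := by
    intro S hS
    ext x
    simp only [hg, Finset.mem_map, Finset.mem_filter, Finset.mem_univ, true_and]
    constructor
    · rintro ⟨b, hb, rfl⟩; exact hb
    · intro hx
      exact ⟨e.symm ⟨x, hS hx⟩, by rw [hψinv x (hS hx)]; exact hx, hψinv x (hS hx)⟩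
  have hcardg : ∀ S : Finset α, S ⊆ M → (g S).card = S.card := by
    intro S hS
    calc (g S).card = ((g S).map ψ).card := (Finset.card_map _).symm
      _ = S.card := by rw [hmapg S hS]
  have hgmap : ∀ X' : Finset (Fin k → Fin n), g (X'.map ψ) = X' := by
    intro X'
    ext b
    simp [hg]
  refine ⟨fun X => (f₀ (g X)).map ψ, ?_, ?_⟩
  · intro X hXM hXk
    have hgX : (g X).card = k := by rw [hcardg X hXM, hXk]
    obtain ⟨hc, hd⟩ := hf₀1 (g X) hgX
    refine ⟨?_, by rw [Finset.card_map, hc], ?_⟩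
    · intro y hy
      obtain ⟨b, _, rfl⟩ := Finset.mem_map.mp hy
      exact hψM b
    · have hd' := (Finset.disjoint_map ψ).mpr hd
      rwa [hmapg X hXM] at hd'
  · intro P hPM hPc
    have hgP : k ^ 2 * n < (g P).card := by rw [hcardg P hPM]; exact hPc
    obtain ⟨X', hX'P, hX'k, y, hy⟩ := hf₀2 (g P) hgP
    rw [Finset.mem_inter] at hy
    refine ⟨X'.map ψ, ?_, by rw [Finset.card_map, hX'k], ⟨ψ y, ?_⟩⟩
    · have hsub := (Finset.map_subset_map (f := ψ)).mpr hX'P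
      rwa [hmapg P hPM] at hsub
    · simp only [hgmap X']
      rw [Finset.mem_inter]
      refine ⟨Finset.mem_map_of_mem ψ hy.1, ?_⟩
      have := hy.2
      simp only [hg, Finset.mem_filter] at this
      exact this.2
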